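/- Assume λ_s(w) ≠ 0 at all arguments appearing below and that for all z ∈ ℂ the constraint λ_0(z) λ_0(z + c/2) = ∏_{s=1}^{n} λ_s(z_{s−1})/λ_s(z_s) holds. Then for every ℓ ∈ {0, 1, …, n} and every z ∈ ℂ: λ_n(z) · ∏_{s=0}^{n−1} α_s(z) · ∏_{s=0}^{ℓ−1} α_s(z_s) = λ_{−ℓ}(z), where λ_{−ℓ}(z) = (1/λ_ℓ(z_ℓ)) ∏_{s=ℓ+1}^{n} λ_s(z_{s−1})/λ_s(z_s). -/

import Mathlib

noncomputable section

def zpt (c z k : ℂ) : ℂ := z - c * (k - 1 / 2)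

lemma tele (n : ℕ) (lam : ℕ → ℂ → ℂ) (z : ℂ) (hne : ∀ s : ℕ, s ≤ n → lam s z ≠ 0) :
    lam n z * ∏ s ∈ Finset.range n, lam s z / lam (s + 1) z = lam 0 z := by
  induction n with
  | zero => simp
  | succ n ih =>
    rw [Finset.prod_range_succ]
    have h1 : lam (n + 1) z ≠ 0 := hne _ le_rfl
    have h2 := ih (fun s hs => hne s (hs.trans (Nat.le_succ n)))
    have hP : (∏ x ∈ Finset.range n, lam (x + 1) z) ≠ 0 :=
      Finset.prod_ne_zero_iff.mpr fun x hx =>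
        hne (x + 1) (by simpa using Nat.succ_le_succ (Finset.mem_range.mp hx).le)
    rw [Finset.prod_div_distrib] at h2 ⊢
    field_simp [hP] at h2 ⊢
    linear_combination h2

lemma peel_bot (a n : ℕ) (h : a ≤ n) (f : ℕ → ℂ) :
    ∏ s ∈ Finset.Icc a n, f s = f a * ∏ s ∈ Finset.Icc (a + 1) n, f s := by
  rw [show Finset.Icc a n = Finset.Ico a (n + 1) by rw [Finset.Ico_add_one_right_eq_Icc],
      Finset.prod_eq_prod_Ico_succ_bot (by omega),
      show Finset.Ico (a + 1) (n + 1) = Finset.Icc (a + 1) n by rw [Finset.Ico_add_one_right_eq_Icc]]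

lemma key (n : ℕ) (c : ℂ) (lam : ℕ → ℂ → ℂ)
    (hne : ∀ s : ℕ, s ≤ n → ∀ w : ℂ, lam s w ≠ 0)
    (hconstraint : ∀ z : ℂ,
      lam 0 z * lam 0 (z + c / 2) =
        ∏ s ∈ Finset.Icc 1 n, lam s (zpt c z ((s : ℂ) - 1)) / lam s (zpt c z s))
    (ℓ : ℕ) (hℓ : ℓ ≤ n) (z : ℂ) :
    lam 0 z * ∏ s ∈ Finset.range ℓ, lam s (zpt c z s) / lam (s + 1) (zpt c z s) =
      (lam ℓ (zpt c z ℓ))⁻¹ *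
        ∏ s ∈ Finset.Icc (ℓ + 1) n, lam s (zpt c z ((s : ℂ) - 1)) / lam s (zpt c z s) := by
  induction ℓ with
  | zero =>
    have h0 : zpt c z ((0 : ℕ) : ℂ) = z + c / 2 := by simp [zpt]; ring
    have hne0 : lam 0 (z + c / 2) ≠ 0 := hne 0 (Nat.zero_le n) _
    rw [Finset.prod_range_zero, mul_one, h0, show (0 : ℕ) + 1 = 1 from rfl,
        ← hconstraint z]
    rw [mul_comm (lam 0 z), ← mul_assoc, inv_mul_cancel₀ hne0, one_mul]
  | succ ℓ ih =>
    have hℓn : ℓ + 1 ≤ n := hℓ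
    have ih' := ih (by omega)
    have e1 : ((ℓ + 1 : ℕ) : ℂ) - 1 = (ℓ : ℂ) := by push_cast; ring
    have hnum : ∏ s ∈ Finset.Icc (ℓ + 1) n, lam s (zpt c z ((s : ℂ) - 1)) =
        lam (ℓ + 1) (zpt c z (ℓ : ℂ)) *
          ∏ s ∈ Finset.Icc (ℓ + 1 + 1) n, lam s (zpt c z ((s : ℂ) - 1)) := by
      rw [peel_bot (ℓ + 1) n hℓn, e1]
    have hden : ∏ s ∈ Finset.Icc (ℓ + 1) n, lam s (zpt c z (s : ℂ)) =
        lam (ℓ + 1) (zpt c z ((ℓ + 1 : ℕ) : ℂ)) *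
          ∏ s ∈ Finset.Icc (ℓ + 1 + 1) n, lam s (zpt c z (s : ℂ)) := by
      rw [peel_bot (ℓ + 1) n hℓn]
    have h1 : lam ℓ (zpt c z ℓ) ≠ 0 := hne ℓ (by omega) _
    have h2 : lam (ℓ + 1) (zpt c z (ℓ : ℂ)) ≠ 0 := hne (ℓ + 1) hℓn _
    have h3 : lam (ℓ + 1) (zpt c z ((ℓ + 1 : ℕ) : ℂ)) ≠ 0 := hne (ℓ + 1) hℓn _
    have hP1 : (∏ s ∈ Finset.range ℓ, lam (s + 1) (zpt c z (s : ℂ))) ≠ 0 :=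
      Finset.prod_ne_zero_iff.mpr fun x hx =>
        hne (x + 1) (by have := Finset.mem_range.mp hx; omega) _
    have hP2 : (∏ s ∈ Finset.Icc (ℓ + 1 + 1) n, lam s (zpt c z (s : ℂ))) ≠ 0 :=
      Finset.prod_ne_zero_iff.mpr fun x hx =>
        hne x (Finset.mem_Icc.mp hx).2 _
    rw [Finset.prod_div_distrib, Finset.prod_div_distrib, hnum, hden] at ih'
    rw [Finset.prod_range_succ, Finset.prod_div_distrib, Finset.prod_div_distrib]
    push_cast at ih' h3 ⊢
    field_simp [hP1, hP2] at ih' ⊢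
    linear_combination ih'

/-- assume the `λ`'s never vanish and satisfy the constraint
`λ_0(z) λ_0(z + c/2) = ∏_{s=1}^{n} λ_s(z_{s−1})/λ_s(z_s)` for all `z`.
Then for `0 ≤ ℓ ≤ n` and any `z`:
`λ_n(z) ∏_{s=0}^{n−1} α_s(z) ∏_{s=0}^{ℓ−1} α_s(z_s) = λ_{−ℓ}(z)`, where
`α_s(z) = λ_s(z)/λ_{s+1}(z)` and
`λ_{−ℓ}(z) = (1/λ_ℓ(z_ℓ)) ∏_{s=ℓ+1}^{n} λ_s(z_{s−1})/λ_s(z_s)`. -/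
theorem statement10 (n : ℕ) (hn : 1 ≤ n) (c : ℂ) (hc : c ≠ 0)
    (lam : ℕ → ℂ → ℂ)
    (hne : ∀ s : ℕ, s ≤ n → ∀ w : ℂ, lam s w ≠ 0)
    (hconstraint : ∀ z : ℂ,
      lam 0 z * lam 0 (z + c / 2) =
        ∏ s ∈ Finset.Icc 1 n, lam s (zpt c z ((s : ℂ) - 1)) / lam s (zpt c z s))
    (ℓ : ℕ) (hℓ : ℓ ≤ n) (z : ℂ) :
    lam n z * (∏ s ∈ Finset.range n, lam s z / lam (s + 1) z) *
        ∏ s ∈ Finset.range ℓ, lam s (zpt c z s) / lam (s + 1) (zpt c z s) =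
      (lam ℓ (zpt c z ℓ))⁻¹ *
        ∏ s ∈ Finset.Icc (ℓ + 1) n, lam s (zpt c z ((s : ℂ) - 1)) / lam s (zpt c z s) := by
  rw [tele n lam z (fun s hs => hne s hs z)]
  exact key n c lam hne hconstraint ℓ hℓ z

end
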